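/- Let G be a simple graph, S a set of vertices of G, X a set of vertices of G, and A_1, …, A_{d'} subsets of X ∖ S. Let Ĝ be the graph obtained from the induced subgraph G[X] by adding d' new vertices w_1, …, w_{d'}, where each w_i is adjacent exactly to the vertices of A_i, and suppose that no cycle of Ĝ contains a vertex of S. Let W be a set of vertices of G such that (a) X is exactly the set of vertices of W that belong to S ∩ W or have a G-neighbor in S ∩ W, and (b) there is an injective assignment of the connected components of G[W ∖ X] to indices in {1, …, d'} such that every vertex v of a component assigned index i satisfies N_G(v) ∩ X ⊆ A_i. Then W is an S-forest of G. -/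

import Mathlib

open Classical in
/-- Collapse a walk along a map that sends edges to edges or collapses them. -/
noncomputable def collapseWalk {α β : Type*} (G' : SimpleGraph α) (H : SimpleGraph β) (φ : α → β)
    (hφ : ∀ a b, G'.Adj a b → H.Adj (φ a) (φ b) ∨ φ a = φ b) :
    ∀ {u v : α}, G'.Walk u v → H.Walk (φ u) (φ v)
  | _, _, .nil => .nil
  | u, _, .cons (v := w) h p =>
    if he : φ u = φ w then (collapseWalk G' H φ hφ p).copy he.symm rfl
    else .cons ((hφ _ _ h).resolve_right he) (collapseWalk G' H φ hφ p)

lemma collapseWalk_edges {α β : Type*} (G' : SimpleGraph α) (H : SimpleGraph β) (φ : α → β)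
    (hφ : ∀ a b, G'.Adj a b → H.Adj (φ a) (φ b) ∨ φ a = φ b)
    {u v : α} (p : G'.Walk u v) :
    ∀ e ∈ (collapseWalk G' H φ hφ p).edges,
      ∃ a b, s(a, b) ∈ p.edges ∧ e = s(φ a, φ b) := by
  induction p with
  | nil => simp [collapseWalk]
  | cons h p ih =>
    intro e he
    rw [collapseWalk] at he
    split_ifs at he with h'
    · rw [SimpleGraph.Walk.edges_copy] at he
      obtain ⟨a, b, hab, rfl⟩ := ih e he
      exact ⟨a, b, by simp [hab], rfl⟩
    · rw [SimpleGraph.Walk.edges_cons] at he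
      rcases List.mem_cons.mp he with rfl | he
      · exact ⟨_, _, by simp, rfl⟩
      · obtain ⟨a, b, hab, rfl⟩ := ih e he
        exact ⟨a, b, by simp [hab], rfl⟩

/-- `W` is an `S`-forest of `G`: no cycle of the induced subgraph `G[W]`
contains a vertex of `S`. -/
def SForest {V : Type*} (G : SimpleGraph V) (S W : Set V) : Prop :=
  ∀ (u : W) (c : (G.induce W).Walk u u), c.IsCycle → ∀ v ∈ c.support, (v : V) ∉ S

/-- The set `S_{≤1}` of vertices of `W` that belong to `S ∩ W` or have a `G`-neighbor
in `S ∩ W`. -/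
def sle1 {V : Type*} (G : SimpleGraph V) (S W : Set V) : Set V :=
  {v | v ∈ W ∧ (v ∈ S ∩ W ∨ ∃ u ∈ S ∩ W, G.Adj v u)}

/-- The graph `Ĝ` obtained from the induced subgraph `G[X]` by adding `d'` new vertices
`w_1, …, w_{d'}`, where `w_i` is adjacent exactly to the vertices of `A i`. -/
def hatGraph {V : Type*} (G : SimpleGraph V) (X : Set V) {d' : ℕ} (A : Fin d' → Set V) :
    SimpleGraph (↥X ⊕ Fin d') :=
  SimpleGraph.fromRel fun a b =>
    match a, b with
    | Sum.inl u, Sum.inl v => G.Adj (u : V) (v : V)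
    | Sum.inl u, Sum.inr i => (u : V) ∈ A i
    | _, _ => False

/-- If `A_1, …, A_{d'} ⊆ X ∖ S`, the graph `Ĝ` built from `G[X]` by adding
vertices `w_i` adjacent exactly to `A_i` has no cycle through a vertex of `S`, and `W` is a
vertex set whose distance-at-most-one part (w.r.t. `S`) is exactly `X` and whose components of
`G[W ∖ X]` can be injectively assigned indices `i` so that every vertex of a component assigned
`i` has all its `G`-neighbors in `X` inside `A_i`, then `W` is an `S`-forest of `G`. -/
theorem stmt5 {V : Type*} (G : SimpleGraph V) (S X : Set V) {d' : ℕ} (A : Fin d' → Set V)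
    (hA : ∀ i, A i ⊆ X \ S)
    (hhat : ∀ (a) (c : (hatGraph G X A).Walk a a), c.IsCycle →
      ∀ b ∈ c.support, ∀ u : ↥X, b = Sum.inl u → (u : V) ∉ S)
    (W : Set V)
    (haX : X = sle1 G S W)
    (f : (G.induce (W \ X)).ConnectedComponent → Fin d')
    (hf : Function.Injective f)
    (hcut : ∀ (v : ↥(W \ X)) (u : V), u ∈ X → G.Adj (v : V) u →
      u ∈ A (f ((G.induce (W \ X)).connectedComponentMk v))) :
    SForest G S W := by
  classical
  intro u c hc v hv hvS
  -- v ∈ X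
  have hvX : (v : V) ∈ X := by
    rw [haX]; exact ⟨v.2, Or.inl ⟨hvS, v.2⟩⟩
  -- rotate the cycle to start at v
  have hc' := hc.rotate hv
  set c' : (G.induce W).Walk v v := c.rotate v hv with hc'def
  clear_value c'
  cases c' with
  | nil => exact absurd (hc'.three_le_length) (by simp)
  | @cons _ t _ h p =>
    -- t is the successor of v on the cycle
    have hGvt : G.Adj (v : V) (t : V) := h
    have htX : (t : V) ∈ X := by
      rw [haX]
      exact ⟨t.2, Or.inr ⟨v, ⟨hvS, v.2⟩, hGvt.symm⟩⟩
    -- the edge s(v,t) lies on a cycle, so there is a walk from v to t avoiding it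
    have hmem : s(v, t) ∈ (SimpleGraph.Walk.cons h p).edges := by simp
    have hreach := (SimpleGraph.adj_and_reachable_delete_edges_iff_exists_cycle.mpr
      ⟨v, _, hc', hmem⟩).2
    obtain ⟨p', hp'⟩ := SimpleGraph.reachable_delete_edges_iff_exists_walk.mp hreach
    -- the collapsing map
    set φ : ↥W → (↥X ⊕ Fin d') := fun a =>
      if ha : (a : V) ∈ X then Sum.inl ⟨a, ha⟩
      else Sum.inr (f ((G.induce (W \ X)).connectedComponentMk ⟨a, a.2, ha⟩)) with hφdef
    have hφ : ∀ a b : ↥W, (G.induce W).Adj a b →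
        (hatGraph G X A).Adj (φ a) (φ b) ∨ φ a = φ b := by
      intro a b hab
      have hGab : G.Adj (a : V) (b : V) := hab
      by_cases ha : (a : V) ∈ X <;> by_cases hb : (b : V) ∈ X
      · left
        simp only [hφdef, dif_pos ha, dif_pos hb]
        exact ⟨by simp [Subtype.ext_iff, hGab.ne], Or.inl hGab⟩
      · left
        simp only [hφdef, dif_pos ha, dif_neg hb]
        exact ⟨by simp, Or.inl (hcut ⟨b, b.2, hb⟩ a ha hGab.symm)⟩
      · left
        simp only [hφdef, dif_neg ha, dif_pos hb]
        exact ⟨by simp, Or.inr (hcut ⟨a, a.2, ha⟩ b hb hGab)⟩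
      · right
        simp only [hφdef, dif_neg ha, dif_neg hb]
        have : (G.induce (W \ X)).Adj ⟨a, a.2, ha⟩ ⟨b, b.2, hb⟩ := hGab
        rw [SimpleGraph.ConnectedComponent.sound this.reachable]
    -- collapse the walk
    have hφv : φ v = Sum.inl ⟨v, hvX⟩ := by simp [hφdef, dif_pos hvX]
    have hφt : φ t = Sum.inl ⟨t, htX⟩ := by simp [hφdef, dif_pos htX]
    set q := collapseWalk (G.induce W) (hatGraph G X A) φ hφ p' with hqdef
    have key : ∀ (a : ↥W) (x : ↥X), φ a = Sum.inl x → (a : V) = (x : V) := by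
      intro a x hx
      simp only [hφdef] at hx
      split_ifs at hx with ha'
      all_goals first
        | (injection hx with hx; exact congrArg Subtype.val hx)
        | simp at hx
    have hqe : s(φ v, φ t) ∉ q.edges := by
      intro hq
      obtain ⟨a, b, hab, heq⟩ := collapseWalk_edges _ _ φ hφ p' _ hq
      rw [hφv, hφt] at heq
      have hab' : s(a, b) = s(v, t) := by
        rcases Sym2.eq_iff.mp heq.symm with ⟨h1, h2⟩ | ⟨h1, h2⟩
        · rw [Subtype.ext (key a _ h1), Subtype.ext (key b _ h2)]
        · rw [Subtype.ext (key a _ h1), Subtype.ext (key b _ h2), Sym2.eq_swap]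
      rw [hab'] at hab
      exact hp' hab
    -- adjacency in the hat graph
    have hadj : (hatGraph G X A).Adj (φ v) (φ t) := by
      rw [hφv, hφt]
      exact ⟨by simp [Subtype.ext_iff, hGvt.ne], Or.inl hGvt⟩
    -- get a cycle in the hat graph through φ v
    have hcyc := SimpleGraph.adj_and_reachable_delete_edges_iff_exists_cycle.mp
      ⟨hadj, SimpleGraph.reachable_delete_edges_iff_exists_walk.mpr ⟨q, hqe⟩⟩
    obtain ⟨a, cc, hcc, hecc⟩ := hcyc
    have hsupp : φ v ∈ cc.support := SimpleGraph.Walk.fst_mem_support_of_mem_edges cc hecc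
    exact hhat a cc hcc (φ v) hsupp ⟨v, hvX⟩ hφv hvS
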